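/- For nonnegative integers i ≤ l, the sum over partitions λ of length exactly l of q^{|λ|} t^{λ_i} equals t q^l / ((1-q)(1-q^2)···(1-q^{i-1}) · (1-q^i t)(1-q^{i+1}t)···(1-q^l t)). -/

import Mathlib

open scoped BigOperators

lemma hasSum_pi_geom_real : ∀ (n : ℕ) (c : Fin n → ℝ), (∀ k, 0 ≤ c k) → (∀ k, c k < 1) →
    HasSum (fun g : Fin n → ℕ => ∏ k, c k ^ g k) (∏ k, (1 - c k)⁻¹) := by
  intro n
  induction n with
  | zero =>
    intro c _ _
    simpa using hasSum_single (f := fun _ : (Fin 0 → ℕ) => (1:ℝ)) default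
      (fun b hb => absurd (Subsingleton.elim b default) hb)
  | succ n ih =>
    intro c hc0 hc1
    have h1 : HasSum (fun m : ℕ => c 0 ^ m) (1 - c 0)⁻¹ :=
      hasSum_geometric_of_norm_lt_one (by rw [Real.norm_eq_abs, abs_of_nonneg (hc0 0)]; exact hc1 0)
    have h2 := ih (fun k => c k.succ) (fun k => hc0 k.succ) (fun k => hc1 k.succ)
    have hsum : Summable fun x : ℕ × (Fin n → ℕ) =>
        c 0 ^ x.1 * ∏ k, c k.succ ^ x.2 k := by
      apply summable_mul_of_summable_norm (f := fun m : ℕ => c 0 ^ m)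
        (g := fun g : Fin n → ℕ => ∏ k, c k.succ ^ g k)
      · simpa [Real.norm_eq_abs, abs_of_nonneg, abs_pow, abs_of_nonneg (hc0 0)]
          using h1.summable
      · have : ∀ g : Fin n → ℕ, ‖∏ k, c k.succ ^ g k‖ = ∏ k, c k.succ ^ g k := by
          intro g
          rw [Real.norm_eq_abs, abs_of_nonneg]
          exact Finset.prod_nonneg fun k _ => pow_nonneg (hc0 k.succ) _
        simpa [this] using h2.summable
    have h3 := h1.mul h2 hsum
    rw [show (∏ k : Fin (n+1), (1 - c k)⁻¹) = (1 - c 0)⁻¹ * ∏ k : Fin n, (1 - c k.succ)⁻¹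
      from Fin.prod_univ_succ _]
    rw [← (Fin.consEquiv (fun _ => ℕ)).hasSum_iff]
    convert h3 using 1
    · rfl
    funext p
    simp only [Function.comp, Fin.consEquiv_apply]
    rw [Fin.prod_univ_succ]
    simp

lemma hasSum_pi_geom : ∀ (n : ℕ) (c : Fin n → ℂ), (∀ k, ‖c k‖ < 1) →
    HasSum (fun g : Fin n → ℕ => ∏ k, c k ^ g k) (∏ k, (1 - c k)⁻¹) := by
  intro n
  induction n with
  | zero =>
    intro c _
    simpa using hasSum_single (f := fun _ : (Fin 0 → ℕ) => (1:ℂ)) default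
      (fun b hb => absurd (Subsingleton.elim b default) hb)
  | succ n ih =>
    intro c hc
    have h1 : HasSum (fun m : ℕ => c 0 ^ m) (1 - c 0)⁻¹ :=
      hasSum_geometric_of_norm_lt_one (hc 0)
    have h2 := ih (fun k => c k.succ) (fun k => hc k.succ)
    have hsum : Summable fun x : ℕ × (Fin n → ℕ) =>
        c 0 ^ x.1 * ∏ k, c k.succ ^ x.2 k := by
      apply summable_mul_of_summable_norm (f := fun m : ℕ => c 0 ^ m)
        (g := fun g : Fin n → ℕ => ∏ k, c k.succ ^ g k)
      · simpa [norm_pow] using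
          (summable_geometric_of_lt_one (norm_nonneg _) (hc 0))
      · have hr := hasSum_pi_geom_real n (fun k => ‖c k.succ‖)
          (fun k => norm_nonneg _) (fun k => hc k.succ)
        simpa [norm_prod, norm_pow] using hr.summable
    have h3 := h1.mul h2 hsum
    rw [show (∏ k : Fin (n+1), (1 - c k)⁻¹) = (1 - c 0)⁻¹ * ∏ k : Fin n, (1 - c k.succ)⁻¹
      from Fin.prod_univ_succ _]
    rw [← (Fin.consEquiv (fun _ => ℕ)).hasSum_iff]
    convert h3 using 1
    · rfl
    funext p
    simp only [Function.comp, Fin.consEquiv_apply]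
    rw [Fin.prod_univ_succ]
    simp


/-- Partitions with exactly `l` positive parts, written as weakly decreasing
tuples of positive integers. -/
def PartL (l : ℕ) : Type :=
  {f : Fin l → ℕ // (∀ i j : Fin l, i ≤ j → f j ≤ f i) ∧ ∀ i, 0 < f i}

def pfun (l : ℕ) (g : Fin l → ℕ) : Fin l → ℕ :=
  fun j => 1 + ∑ k ∈ Finset.univ.filter (fun k : Fin l => j ≤ k), g k

lemma filter_succ {l : ℕ} (j : Fin l) (h : j.1 + 1 < l) :
    Finset.univ.filter (fun k : Fin l => j ≤ k) =
      insert j (Finset.univ.filter (fun k : Fin l => (⟨j.1 + 1, h⟩ : Fin l) ≤ k)) := by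
  ext k
  simp only [Finset.mem_filter, Finset.mem_univ, true_and, Finset.mem_insert, Fin.le_def,
    Fin.ext_iff]
  omega

lemma filter_last {l : ℕ} (j : Fin l) (h : j.1 + 1 = l) :
    Finset.univ.filter (fun k : Fin l => j ≤ k) = {j} := by
  ext k
  simp only [Finset.mem_filter, Finset.mem_univ, true_and, Finset.mem_singleton, Fin.le_def,
    Fin.ext_iff]
  have := k.2
  omega

def invp (l : ℕ) (p : PartL l) : Fin l → ℕ :=
  fun j => if h : j.1 + 1 < l then p.1 j - p.1 ⟨j.1 + 1, h⟩ else p.1 j - 1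

lemma pfun_invp (l : ℕ) (p : PartL l) :
    ∀ m (j : Fin l), j.1 + m + 1 = l → pfun l (invp l p) j = p.1 j := by
  intro m
  induction m with
  | zero =>
    intro j hj
    unfold pfun
    rw [filter_last j (by omega), Finset.sum_singleton]
    unfold invp
    rw [dif_neg (by omega)]
    have := p.2.2 j
    omega
  | succ m ih =>
    intro j hj
    have h1 : j.1 + 1 < l := by omega
    have h2 := ih ⟨j.1 + 1, h1⟩ (by show j.1 + 1 + m + 1 = l; omega)
    unfold pfun at h2 ⊢
    rw [filter_succ j h1, Finset.sum_insert (by simp [Fin.le_def])]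
    have h3 : invp l p j = p.1 j - p.1 ⟨j.1 + 1, h1⟩ := by unfold invp; rw [dif_pos h1]
    have h4 : p.1 ⟨j.1 + 1, h1⟩ ≤ p.1 j := p.2.1 j ⟨j.1 + 1, h1⟩ (by rw [Fin.le_def]; exact Nat.le_succ _)
    have h5 := p.2.2 (⟨j.1 + 1, h1⟩ : Fin l)
    omega

def partEquiv (l : ℕ) : (Fin l → ℕ) ≃ PartL l where
  toFun g := ⟨pfun l g, fun a b hab => by
      unfold pfun
      apply Nat.add_le_add_left
      apply Finset.sum_le_sum_of_subset
      intro k hk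
      simp only [Finset.mem_filter, Finset.mem_univ, true_and] at hk ⊢
      exact le_trans hab hk,
    fun j => by unfold pfun; omega⟩
  invFun p := invp l p
  left_inv g := by
    funext j
    show (if h : j.1 + 1 < l then pfun l g j - pfun l g ⟨j.1 + 1, h⟩ else pfun l g j - 1) = g j
    by_cases h : j.1 + 1 < l
    · rw [dif_pos h]
      show pfun l g j - pfun l g ⟨j.1 + 1, h⟩ = g j
      unfold pfun
      rw [filter_succ j h, Finset.sum_insert (by simp [Fin.le_def])]
      omega
    · rw [dif_neg h]
      show pfun l g j - 1 = g j
      unfold pfun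
      rw [filter_last j (by have := j.2; omega), Finset.sum_singleton]
      omega
  right_inv p := by
    apply Subtype.ext
    funext j
    exact pfun_invp l p (l - 1 - j.1) j (by have := j.2; omega)

lemma sum_pfun (l : ℕ) (g : Fin l → ℕ) :
    ∑ j, pfun l g j = l + ∑ k : Fin l, (k.1 + 1) * g k := by
  unfold pfun
  rw [Finset.sum_add_distrib]
  congr 1
  · simp
  calc ∑ j : Fin l, ∑ k ∈ Finset.univ.filter (fun k : Fin l => j ≤ k), g k
      = ∑ j : Fin l, ∑ k : Fin l, if j ≤ k then g k else 0 := by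
        exact Finset.sum_congr rfl fun j _ => Finset.sum_filter _ _
    _ = ∑ k : Fin l, ∑ j : Fin l, if j ≤ k then g k else 0 := Finset.sum_comm
    _ = ∑ k : Fin l, (k.1 + 1) * g k := by
        refine Finset.sum_congr rfl fun k _ => ?_
        rw [← Finset.sum_filter, Finset.sum_const]
        have hcard : (Finset.univ.filter (fun j : Fin l => j ≤ k)).card = k.1 + 1 := by
          have : Finset.univ.filter (fun j : Fin l => j ≤ k) = Finset.Iic k := by
            ext j; simp
          rw [this, Fin.card_Iic]
        rw [hcard, smul_eq_mul]

theorem stmt5 (q t : ℂ) (hq : ‖q‖ < 1) (ht : ‖t‖ < 1) (i l : ℕ)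
    (hi : 1 ≤ i) (hil : i ≤ l) :
    ∑' p : PartL l, q ^ (∑ j, p.1 j) * t ^ (p.1 ⟨i - 1, by omega⟩) =
      t * q ^ l /
        ((∏ j ∈ Finset.range (i - 1), (1 - q ^ (j + 1))) *
          ∏ j ∈ Finset.Icc i l, (1 - q ^ j * t)) := by
  set d : ℕ → ℂ := fun m => q ^ (m + 1) * (if i - 1 ≤ m then t else 1) with hd
  set c : Fin l → ℂ := fun k => d k.1 with hc
  have hcn : ∀ k : Fin l, ‖c k‖ < 1 := by
    intro k
    simp only [hc, hd, norm_mul, norm_pow]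
    have h1 : ‖q‖ ^ (k.1 + 1) < 1 := pow_lt_one₀ (norm_nonneg q) hq (Nat.succ_ne_zero _)
    have h1' : 0 ≤ ‖q‖ ^ (k.1 + 1) := pow_nonneg (norm_nonneg q) _
    split
    · nlinarith [norm_nonneg t]
    · simp only [norm_one, mul_one]; exact h1
  have hgeo := hasSum_pi_geom l c hcn
  have hterm : ∀ g : Fin l → ℕ,
      q ^ (∑ j, pfun l g j) * t ^ (pfun l g ⟨i - 1, by omega⟩) =
        (t * q ^ l) * ∏ k, c k ^ g k := by
    intro g
    rw [sum_pfun, pfun]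
    have hfilt : Finset.univ.filter (fun k : Fin l => (⟨i - 1, by omega⟩ : Fin l) ≤ k) =
        Finset.univ.filter (fun k : Fin l => i - 1 ≤ k.1) := by
      ext k; simp [Fin.le_def]
    rw [hfilt, pow_add, pow_add, pow_one]
    rw [← Finset.prod_pow_eq_pow_sum, ← Finset.prod_pow_eq_pow_sum]
    have h2 : ∀ k : Fin l, q ^ ((k.1 + 1) * g k) = (q ^ (k.1 + 1)) ^ g k := fun k => pow_mul q _ _
    rw [Finset.prod_congr rfl fun k _ => h2 k]
    have h3 : (∏ k ∈ Finset.univ.filter (fun k : Fin l => i - 1 ≤ k.1), t ^ g k) =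
        ∏ k : Fin l, (if i - 1 ≤ k.1 then t else 1) ^ g k := by
      rw [Finset.prod_filter]
      refine Finset.prod_congr rfl fun k _ => ?_
      split <;> simp
    rw [h3]
    have h4 : ∀ k : Fin l, (q ^ (k.1 + 1)) ^ g k * (if i - 1 ≤ k.1 then t else 1) ^ g k
        = c k ^ g k := fun k => (mul_pow _ _ _).symm
    have h5 : (∏ k : Fin l, (q ^ (k.1 + 1)) ^ g k) *
        (∏ k : Fin l, (if i - 1 ≤ k.1 then t else 1) ^ g k) = ∏ k : Fin l, c k ^ g k := by
      rw [← Finset.prod_mul_distrib]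
      exact Finset.prod_congr rfl fun k _ => h4 k
    rw [← h5]
    ring
  have hprod : (∏ k : Fin l, (1 - c k)) =
      (∏ j ∈ Finset.range (i - 1), (1 - q ^ (j + 1))) *
        ∏ j ∈ Finset.Icc i l, (1 - q ^ j * t) := by
    have := Fin.prod_univ_eq_prod_range (fun m => 1 - d m) l
    rw [show (∏ k : Fin l, (1 - c k)) = ∏ k : Fin l, (1 - d k.1) from rfl, this]
    rw [← Finset.prod_range_mul_prod_Ico _ (show i - 1 ≤ l by omega)]
    congr 1
    · refine Finset.prod_congr rfl fun m hm => ?_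
      rw [Finset.mem_range] at hm
      simp only [hd]
      rw [if_neg (by omega), mul_one]
    · rw [Finset.prod_Ico_eq_prod_range]
      rw [show Finset.Icc i l = Finset.Ico i (l + 1) from (Finset.Ico_add_one_right_eq_Icc i l).symm]
      rw [Finset.prod_Ico_eq_prod_range]
      rw [show l - (i - 1) = l + 1 - i by omega]
      refine Finset.prod_congr rfl fun j hj => ?_
      simp only [hd]
      rw [if_pos (by omega), show i - 1 + j + 1 = i + j by omega]
  calc ∑' p : PartL l, q ^ (∑ j, p.1 j) * t ^ (p.1 ⟨i - 1, by omega⟩)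
      = ∑' g : Fin l → ℕ, q ^ (∑ j, pfun l g j) * t ^ (pfun l g ⟨i - 1, by omega⟩) := by
        rw [← (partEquiv l).tsum_eq (fun p : PartL l =>
          q ^ (∑ j, p.1 j) * t ^ (p.1 ⟨i - 1, by omega⟩))]
        exact tsum_congr fun g => rfl
    _ = ∑' g : Fin l → ℕ, (t * q ^ l) * ∏ k, c k ^ g k := tsum_congr hterm
    _ = (t * q ^ l) * ∏ k, (1 - c k)⁻¹ := (hgeo.mul_left _).tsum_eq
    _ = t * q ^ l /
        ((∏ j ∈ Finset.range (i - 1), (1 - q ^ (j + 1))) *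
          ∏ j ∈ Finset.Icc i l, (1 - q ^ j * t)) := by
        rw [Finset.prod_inv_distrib, hprod, div_eq_mul_inv]
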